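/- The relation 2A_2 + 2(𝖣C_2)/C_2 = L^4 − 1 for local P^3 (eq. (7.8)): In ℚ[[q]] define I_{10} = 4·Σ_{d≥1} (4d−1)!/(d!)^4 q^d, I_{20} = 4·Σ_{d≥1} (4d−1)!/(d!)^4 (4Har[4d−1] − 4Har[d]) q^d with Har[m] = Σ_{k=1}^{m} 1/k, C_1 = 1 + 𝖣I_{10}, A_2 = (𝖣C_1)/C_1, C_2 = 1 + 𝖣((I_{10} + 𝖣I_{20})/C_1), where 𝖣 = q·d/dq. Then 2A_2 + 2(𝖣C_2)/C_2 = (1−256q)^{−1} − 1 in ℚ[[q]], where (1−256q)^{−1} − 1 = L^4 − 1 for L ∈ ℚ[[q]] the unique series with constant term 1 satisfying L^4(1−256q) = 1. -/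

import Mathlib

/-!
STATEMENT 11: The relation 2A₂ + 2(𝖣C₂)/C₂ = L⁴ − 1 for local P³:
2A₂ + 2(𝖣C₂)/C₂ = (1−256q)⁻¹ − 1 in ℚ[[q]].
-/

noncomputable section

/-- The derivation `𝖣 = q·d/dq` on `ℚ[[q]]`. -/
def Dq (G : PowerSeries ℚ) : PowerSeries ℚ :=
  PowerSeries.mk fun d => (d : ℚ) * PowerSeries.coeff d G

/-- Harmonic number `Har[m] = Σ_{k=1}^m 1/k`. -/
def Har (m : ℕ) : ℚ := ∑ k ∈ Finset.range m, ((k : ℚ) + 1)⁻¹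

/-- `I₁₀ = 4·Σ_{d≥1} (4d−1)!/(d!)^4 q^d`. -/
def I₁₀ : PowerSeries ℚ :=
  PowerSeries.mk fun d => if d = 0 then 0 else
    4 * ((4 * d - 1).factorial : ℚ) / ((d.factorial : ℚ)) ^ 4

/-- `I₂₀ = 4·Σ_{d≥1} (4d−1)!/(d!)^4 (4Har[4d−1] − 4Har[d]) q^d`. -/
def I₂₀ : PowerSeries ℚ :=
  PowerSeries.mk fun d => if d = 0 then 0 else
    4 * ((4 * d - 1).factorial : ℚ) / ((d.factorial : ℚ)) ^ 4
      * (4 * Har (4 * d - 1) - 4 * Har d)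

/-- `C₁ = 1 + 𝖣I₁₀`. -/
def C₁ : PowerSeries ℚ := 1 + Dq I₁₀

/-- `A₂ = (𝖣C₁)/C₁`. -/
def A₂ : PowerSeries ℚ := Dq C₁ * C₁⁻¹

/-- `C₂ = 1 + 𝖣((I₁₀ + 𝖣I₂₀)/C₁)`. -/
def C₂ : PowerSeries ℚ := 1 + Dq ((I₁₀ + Dq I₂₀) * C₁⁻¹)

open PowerSeries

lemma coeff_Dq (f : PowerSeries ℚ) (n : ℕ) : coeff n (Dq f) = n * coeff n f := by
  simp [Dq]

lemma Dq_eq (f : PowerSeries ℚ) : Dq f = X * f.derivativeFun := by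
  ext n
  cases n with
  | zero => simp [coeff_Dq, coeff_zero_eq_constantCoeff, map_mul, constantCoeff_X]
  | succ n => rw [coeff_Dq, coeff_succ_X_mul, show f.derivativeFun = derivative ℚ f from rfl, coeff_derivative]; push_cast; ring

lemma Dq_add (f g : PowerSeries ℚ) : Dq (f + g) = Dq f + Dq g := by
  ext n; simp [coeff_Dq]; ring

lemma Dq_sub (f g : PowerSeries ℚ) : Dq (f - g) = Dq f - Dq g := by
  ext n; simp [coeff_Dq]; ring

lemma Dq_neg (f : PowerSeries ℚ) : Dq (-f) = -Dq f := by
  ext n; simp [coeff_Dq]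

lemma Dq_mul (f g : PowerSeries ℚ) : Dq (f * g) = f * Dq g + g * Dq f := by
  rw [Dq_eq, Dq_eq, Dq_eq, derivativeFun_mul, smul_eq_mul, smul_eq_mul]; ring

lemma Dq_one : Dq (1 : PowerSeries ℚ) = 0 := by
  ext n; cases n <;> simp [coeff_Dq, coeff_one]

lemma Dq_X : Dq (X : PowerSeries ℚ) = X := by
  ext n; rw [coeff_Dq, coeff_X]
  by_cases h : n = 1 <;> simp [h, coeff_X]

lemma Dq_C (a : ℚ) : Dq (C a) = 0 := by
  ext n; cases n <;> simp [coeff_Dq, coeff_C]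

lemma Dq_ofNat (n : ℕ) [n.AtLeastTwo] : Dq (no_index (OfNat.ofNat n) : PowerSeries ℚ) = 0 := by
  rw [← map_ofNat C n]; exact Dq_C _

lemma Dq_zero : Dq (0 : PowerSeries ℚ) = 0 := by
  ext n; simp [coeff_Dq]

lemma constantCoeff_Dq (f : PowerSeries ℚ) : constantCoeff (Dq f) = 0 := by
  rw [← coeff_zero_eq_constantCoeff, coeff_Dq]; simp

def Aq : PowerSeries ℚ := 1 - 256 * X

def Nop (f : PowerSeries ℚ) : PowerSeries ℚ :=
  Aq * Aq * Dq (Dq f) - 128 * (X * (Aq * Dq f)) - 12 * (X * (Aq * f))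

def Eop (f : PowerSeries ℚ) : PowerSeries ℚ :=
  -(2 * (Aq * (Aq * Dq f))) + 128 * (X * (Aq * f))

def MH (f : PowerSeries ℚ) : PowerSeries ℚ :=
  Aq * Dq (Dq (Dq f)) - 384 * (X * Dq (Dq f)) - 176 * (X * Dq f) - 24 * (X * f)

def MHp (f : PowerSeries ℚ) : PowerSeries ℚ :=
  3 * Dq (Dq f) - 768 * (X * Dq (Dq f)) - 768 * (X * Dq f) - 176 * (X * f)

lemma ID (f h : PowerSeries ℚ) :
    Aq * Aq * MH (f * h) =
      Aq * (f * Dq (Nop h) + h * Dq (Nop f)) + 3 * (Aq * (Dq f * Nop h + Dq h * Nop f))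
        + 256 * (X * (f * Nop h + h * Nop f)) := by
  simp only [Nop, MH, Aq, Dq_sub, Dq_add, Dq_mul, Dq_one, Dq_X, Dq_ofNat, Dq_zero]
  ring

lemma ID2 (f : PowerSeries ℚ) :
    Aq * (f * Dq (Eop f)) + 3 * (Aq * (Dq f * Eop f)) + 256 * (X * (f * Eop f))
      + Aq * Aq * MHp (f * f) = 4 * (Aq * (f * Nop f)) := by
  simp only [Nop, Eop, MHp, Aq, Dq_sub, Dq_add, Dq_mul, Dq_one, Dq_X, Dq_ofNat, Dq_zero, neg_mul, Dq_neg]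
  ring

lemma ID3 (f g : PowerSeries ℚ) :
    Aq * Aq * Dq (f * f + f * Dq g - g * Dq f) =
      128 * (X * (Aq * (f * f + f * Dq g - g * Dq f))) + f * (Nop g - Eop f) - g * Nop f := by
  simp only [Nop, Eop, Aq, Dq_sub, Dq_add, Dq_mul, Dq_one, Dq_X, Dq_ofNat, Dq_zero]
  ring

lemma coeff_ofNat_mul (n : ℕ) [n.AtLeastTwo] (f : PowerSeries ℚ) (k : ℕ) :
    coeff k ((no_index (OfNat.ofNat n) : PowerSeries ℚ) * f) = (OfNat.ofNat n : ℚ) * coeff k f := by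
  rw [← map_ofNat C n, coeff_C_mul]


def vc : ℕ → ℚ
  | 0 => 1
  | 1 => 12
  | n + 2 => ((512*((n:ℚ)+1)^2 + 128*((n:ℚ)+1) + 12) * vc (n+1)
      - (65536*(n:ℚ)^2 + 32768*(n:ℚ) + 3072) * vc n) / ((n:ℚ)+2)^2

def gc : ℕ → ℚ
  | 0 => 0
  | 1 => 104
  | n + 2 => ((512*((n:ℚ)+1)^2 + 128*((n:ℚ)+1) + 12) * gc (n+1)
      - (65536*(n:ℚ)^2 + 32768*(n:ℚ) + 3072) * gc n
      - 2*(((n:ℚ)+2) * vc (n+2) - 512*((n:ℚ)+1)*vc (n+1) + 65536*(n:ℚ)*vc n)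
      + 128 * vc (n+1) - 32768 * vc n) / ((n:ℚ)+2)^2

def V : PowerSeries ℚ := PowerSeries.mk vc
def G : PowerSeries ℚ := PowerSeries.mk gc

lemma coeff_V (n : ℕ) : coeff n V = vc n := coeff_mk n vc
lemma coeff_G (n : ℕ) : coeff n G = gc n := coeff_mk n gc

lemma EqV' : Dq (Dq V) = 512*(X*Dq (Dq V)) - 65536*(X*(X*Dq (Dq V)))
    + 128*(X*Dq V) - 32768*(X*(X*Dq V)) + 12*(X*V) - 3072*(X*(X*V)) := by
  ext n
  rcases n with _ | _ | m
  · simp [coeff_Dq, coeff_ofNat_mul, coeff_zero_X_mul, constantCoeff_Dq]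
  · simp [coeff_Dq, coeff_ofNat_mul, coeff_zero_X_mul, coeff_succ_X_mul, coeff_V, vc]
  · simp only [map_add, map_sub, coeff_ofNat_mul, coeff_succ_X_mul, coeff_Dq, coeff_V]
    have h2 : (m + 2 : ℕ) ≠ 0 := by omega
    have hcast : ((m + 2 : ℕ) : ℚ) = (m : ℚ) + 2 := by push_cast; ring
    have hc1 : ((m + 1 : ℕ) : ℚ) = (m : ℚ) + 1 := by push_cast; ring
    have hv : vc (m+2) = ((512*((m:ℚ)+1)^2 + 128*((m:ℚ)+1) + 12) * vc (m+1)
      - (65536*(m:ℚ)^2 + 32768*(m:ℚ) + 3072) * vc m) / ((m:ℚ)+2)^2 := by rw [vc]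
    rw [hv, hcast, hc1]
    have hne : ((m:ℚ)+2)^2 ≠ 0 := by positivity
    field_simp
    ring

lemma EqG' : Dq (Dq G) - 512*(X*Dq (Dq G)) + 65536*(X*(X*Dq (Dq G)))
      - 128*(X*Dq G) + 32768*(X*(X*Dq G)) - 12*(X*G) + 3072*(X*(X*G))
    = -(2*(Dq V - 512*(X*Dq V) + 65536*(X*(X*Dq V)))) + 128*(X*V) - 32768*(X*(X*V)) := by
  ext n
  rcases n with _ | _ | m
  · simp [coeff_Dq, coeff_ofNat_mul, coeff_zero_X_mul, constantCoeff_Dq]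
  · simp [coeff_Dq, coeff_ofNat_mul, coeff_zero_X_mul, coeff_succ_X_mul, coeff_V, coeff_G]
    norm_num [vc, gc]
  · simp only [map_add, map_sub, map_neg, coeff_ofNat_mul, coeff_succ_X_mul, coeff_Dq,
      coeff_V, coeff_G]
    have hcast : ((m + 2 : ℕ) : ℚ) = (m : ℚ) + 2 := by push_cast; ring
    have hc1 : ((m + 1 : ℕ) : ℚ) = (m : ℚ) + 1 := by push_cast; ring
    have hg : gc (m+2) = ((512*((m:ℚ)+1)^2 + 128*((m:ℚ)+1) + 12) * gc (m+1)
      - (65536*(m:ℚ)^2 + 32768*(m:ℚ) + 3072) * gc m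
      - 2*(((m:ℚ)+2) * vc (m+2) - 512*((m:ℚ)+1)*vc (m+1) + 65536*(m:ℚ)*vc m)
      + 128 * vc (m+1) - 32768 * vc m) / ((m:ℚ)+2)^2 := by rw [gc]
    rw [hg, hcast, hc1]
    have hne : ((m:ℚ)+2)^2 ≠ 0 := by positivity
    field_simp
    ring

lemma coeff_MH_succ (f : PowerSeries ℚ) (n : ℕ) :
    coeff (n+1) (MH f) = ((n:ℚ)+1)^3 * coeff (n+1) f
      - (256*(n:ℚ)^3 + 384*(n:ℚ)^2 + 176*(n:ℚ) + 24) * coeff n f := by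
  simp only [MH, Aq, sub_mul, one_mul, map_sub, coeff_ofNat_mul, mul_assoc]
  rw [coeff_succ_X_mul, coeff_succ_X_mul, coeff_succ_X_mul, coeff_succ_X_mul]
  simp only [coeff_Dq]
  push_cast
  ring

lemma coeff_MH_zero (f : PowerSeries ℚ) : coeff 0 (MH f) = 0 := by
  simp [MH, Aq, sub_mul, one_mul, coeff_zero_eq_constantCoeff, map_mul, constantCoeff_X,
    constantCoeff_Dq]

lemma coeff_MHp_succ (f : PowerSeries ℚ) (n : ℕ) :
    coeff (n+1) (MHp f) = 3*((n:ℚ)+1)^2 * coeff (n+1) f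
      - (768*(n:ℚ)^2 + 768*(n:ℚ) + 176) * coeff n f := by
  simp only [MHp, map_sub, coeff_ofNat_mul, mul_assoc]
  rw [coeff_succ_X_mul, coeff_succ_X_mul, coeff_succ_X_mul]
  simp only [coeff_Dq]
  push_cast
  ring

lemma MH_null {f : PowerSeries ℚ} (h : MH f = 0) (h0 : constantCoeff f = 0) : f = 0 := by
  ext n
  induction n with
  | zero => simpa [coeff_zero_eq_constantCoeff] using h0
  | succ n ih =>
    have hc := coeff_MH_succ f n
    rw [h] at hc
    simp only [map_zero] at hc ih ⊢
    rw [ih, mul_zero, sub_zero] at hc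
    have h3 : ((n:ℚ)+1)^3 ≠ 0 := by positivity
    rcases mul_eq_zero.mp hc.symm with h' | h'
    · exact absurd h' h3
    · exact h'

lemma Dq_null {f : PowerSeries ℚ} (h : Dq f = 0) : f = C (constantCoeff f) := by
  ext n
  cases n with
  | zero => simp [coeff_zero_eq_constantCoeff, coeff_C]
  | succ n =>
    have hc : coeff (n+1) (Dq f) = 0 := by rw [h, map_zero]
    rw [coeff_Dq] at hc
    have : ((n:ℚ)+1) ≠ 0 := by positivity
    rw [coeff_C]
    simp only [Nat.succ_ne_zero, if_false]
    push_cast at hc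
    rcases mul_eq_zero.mp hc with h' | h'
    · exact absurd h' this
    · exact h'

-- statement-side coefficients
lemma coeff_C₁_zero : coeff 0 C₁ = 1 := by
  simp [C₁, coeff_zero_eq_constantCoeff, constantCoeff_Dq]

lemma coeff_C₁_succ (n : ℕ) :
    coeff (n+1) C₁ = ((n:ℚ)+1) * (4 * (((4*n+3).factorial : ℕ) : ℚ) / (((n+1).factorial : ℕ) : ℚ)^4) := by
  have h1 : coeff (n+1) (1 : PowerSeries ℚ) = 0 := by simp [coeff_one]
  have h2 : 4*(n+1) - 1 = 4*n+3 := by omega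
  simp only [C₁, map_add, h1, zero_add, coeff_Dq, I₁₀, coeff_mk, Nat.succ_ne_zero, if_false, h2]
  push_cast
  ring

lemma coeff_U_zero : coeff 0 (I₁₀ + Dq I₂₀) = 0 := by
  simp [I₁₀, coeff_zero_eq_constantCoeff, constantCoeff_Dq, constantCoeff_mk]

lemma coeff_U_succ (n : ℕ) :
    coeff (n+1) (I₁₀ + Dq I₂₀) =
      4 * (((4*n+3).factorial : ℕ) : ℚ) / (((n+1).factorial : ℕ) : ℚ)^4
      + ((n:ℚ)+1) * (4 * (((4*n+3).factorial : ℕ) : ℚ) / (((n+1).factorial : ℕ) : ℚ)^4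
          * (4 * Har (4*n+3) - 4 * Har (n+1))) := by
  have h2 : 4*(n+1) - 1 = 4*n+3 := by omega
  simp only [map_add, coeff_Dq, I₁₀, I₂₀, coeff_mk, Nat.succ_ne_zero, if_false, h2]
  push_cast
  ring

lemma Har_succ (m : ℕ) : Har (m+1) = Har m + 1/((m:ℚ)+1) := by
  simp [Har, Finset.sum_range_succ]

lemma fact_cast_succ (m : ℕ) : (((m+1).factorial : ℕ) : ℚ) = ((m:ℚ)+1) * ((m.factorial : ℕ) : ℚ) := by
  rw [Nat.factorial_succ]; push_cast; ring

lemma MH_C₁ : MH C₁ = 0 := by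
  ext n
  rcases n with _ | _ | m
  · simp [coeff_MH_zero]
  · rw [coeff_MH_succ, coeff_C₁_succ, coeff_C₁_zero]
    norm_num [Nat.factorial]
  · rw [coeff_MH_succ, map_zero]
    have e1 : (m+1+1 : ℕ) = m+2 := rfl
    rw [e1, coeff_C₁_succ (m+1), coeff_C₁_succ m]
    have hf : 4*(m+1)+3 = (4*m+3) + 4 := by omega
    rw [hf]
    have hfa : ((((4*m+3) + 4).factorial : ℕ) : ℚ)
        = ((4*m:ℚ)+7) * ((4*m:ℚ)+6) * ((4*m:ℚ)+5) * ((4*m:ℚ)+4) * (((4*m+3).factorial : ℕ) : ℚ) := by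
      have : (4*m+3) + 4 = ((4*m+3) + 3) + 1 := by omega
      rw [this, Nat.factorial_succ]
      have : (4*m+3) + 3 = ((4*m+3) + 2) + 1 := by omega
      rw [this, Nat.factorial_succ]
      have : (4*m+3) + 2 = ((4*m+3) + 1) + 1 := by omega
      rw [this, Nat.factorial_succ]
      rw [Nat.factorial_succ]
      push_cast
      ring
    rw [hfa]
    have e2 : (m+1+1 : ℕ) = (m+1)+1 := rfl
    rw [fact_cast_succ (m+1), fact_cast_succ m]
    have hP : ((m.factorial : ℕ) : ℚ) ≠ 0 := by
      exact_mod_cast Nat.cast_ne_zero.mpr (Nat.factorial_ne_zero m)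
    have hm1 : ((m:ℚ)+1) ≠ 0 := by positivity
    have hm2 : ((m:ℚ)+2) ≠ 0 := by positivity
    push_cast
    field_simp
    ring

lemma constantCoeff_MHp (f : PowerSeries ℚ) : constantCoeff (MHp f) = 0 := by
  have h3 : (3 : PowerSeries ℚ) * Dq (Dq f) = C 3 * Dq (Dq f) := by
    rw [map_ofNat]
  simp [MHp, h3, map_mul, constantCoeff_X, constantCoeff_Dq]

lemma Har_add4 (k : ℕ) : Har (k+4) = Har k + 1/((k:ℚ)+1) + 1/((k:ℚ)+2) + 1/((k:ℚ)+3) + 1/((k:ℚ)+4) := by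
  have e3 : k+4 = (k+3)+1 := by omega
  have e2 : k+3 = (k+2)+1 := by omega
  have e1 : k+2 = (k+1)+1 := by omega
  rw [e3, Har_succ, e2, Har_succ, e1, Har_succ, Har_succ]
  push_cast
  ring

lemma MH_U : MH (I₁₀ + Dq I₂₀) = -(MHp C₁) := by
  ext n
  rcases n with _ | _ | m
  · simp [coeff_MH_zero, constantCoeff_MHp]
  · rw [coeff_MH_succ, coeff_U_succ, coeff_U_zero, map_neg, coeff_MHp_succ,
      coeff_C₁_succ, coeff_C₁_zero]
    have hh3 : Har 3 = 1 + 1/2 + 1/3 := by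
      norm_num [Har, Finset.sum_range_succ]
    have hh1 : Har 1 = 1 := by norm_num [Har, Finset.sum_range_succ]
    norm_num [hh3, hh1, Nat.factorial]
  · have e1 : (m+1+1 : ℕ) = (m+1)+1 := rfl
    rw [coeff_MH_succ, map_neg, coeff_MHp_succ, e1,
      coeff_U_succ (m+1), coeff_U_succ m, coeff_C₁_succ (m+1), coeff_C₁_succ m]
    have hf : 4*(m+1)+3 = (4*m+3) + 4 := by omega
    rw [hf]
    have hfa : ((((4*m+3) + 4).factorial : ℕ) : ℚ)
        = ((4*m:ℚ)+7) * ((4*m:ℚ)+6) * ((4*m:ℚ)+5) * ((4*m:ℚ)+4) * (((4*m+3).factorial : ℕ) : ℚ) := by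
      have h1 : (4*m+3) + 4 = ((4*m+3) + 3) + 1 := by omega
      rw [h1, Nat.factorial_succ]
      have h2 : (4*m+3) + 3 = ((4*m+3) + 2) + 1 := by omega
      rw [h2, Nat.factorial_succ]
      have h3 : (4*m+3) + 2 = ((4*m+3) + 1) + 1 := by omega
      rw [h3, Nat.factorial_succ]
      rw [Nat.factorial_succ]
      push_cast
      ring
    rw [hfa, Har_add4, fact_cast_succ (m+1), Har_succ (m+1)]
    have hP : (((m+1).factorial : ℕ) : ℚ) ≠ 0 := by
      exact_mod_cast Nat.cast_ne_zero.mpr (Nat.factorial_ne_zero (m+1))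
    have hm1 : ((m:ℚ)+1) ≠ 0 := by positivity
    have hm2 : ((m:ℚ)+2) ≠ 0 := by positivity
    have h41 : ((4*m:ℚ)+4) ≠ 0 := by positivity
    have h42 : ((4*m:ℚ)+5) ≠ 0 := by positivity
    have h43 : ((4*m:ℚ)+6) ≠ 0 := by positivity
    have h44 : ((4*m:ℚ)+7) ≠ 0 := by positivity
    have hF : (((4*m+3).factorial : ℕ) : ℚ) ≠ 0 := by
      exact_mod_cast Nat.cast_ne_zero.mpr (Nat.factorial_ne_zero (4*m+3))
    push_cast
    field_simp
    ring

lemma NopV : Nop V = 0 := by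
  have h := EqV'
  unfold Nop Aq
  linear_combination h

lemma NopG : Nop G = Eop V := by
  have h := EqG'
  unfold Nop Eop Aq
  linear_combination h

lemma constantCoeff_Aq : constantCoeff Aq = 1 := by
  simp [Aq, map_sub, map_mul, constantCoeff_X, ← map_ofNat C 256]

lemma Aq_ne : (Aq : PowerSeries ℚ) ≠ 0 := by
  intro h
  have := constantCoeff_Aq
  rw [h, map_zero] at this
  norm_num at this

lemma constantCoeff_V : constantCoeff V = 1 := by
  have : coeff 0 V = vc 0 := coeff_mk 0 vc
  rw [← coeff_zero_eq_constantCoeff, this]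
  norm_num [vc]

lemma constantCoeff_G : constantCoeff G = 0 := by
  have : coeff 0 G = gc 0 := coeff_mk 0 gc
  rw [← coeff_zero_eq_constantCoeff, this]
  norm_num [gc]

lemma MH_sub (f g : PowerSeries ℚ) : MH (f - g) = MH f - MH g := by
  simp only [MH, Dq_sub]
  ring

lemma MH_VV : MH (V * V) = 0 := by
  have h := ID V V
  rw [NopV, Dq_zero] at h
  have h2 : Aq * Aq * MH (V * V) = 0 := by linear_combination h
  rcases mul_eq_zero.mp h2 with h' | h'
  · rcases mul_eq_zero.mp h' with h'' | h'' <;> exact absurd h'' Aq_ne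
  · exact h'

lemma C₁_eq : C₁ = V * V := by
  have hs : MH (C₁ - V * V) = 0 := by rw [MH_sub, MH_C₁, MH_VV, sub_zero]
  have h0 : constantCoeff (C₁ - V * V) = 0 := by
    rw [map_sub, map_mul, constantCoeff_V, ← coeff_zero_eq_constantCoeff, coeff_C₁_zero]
    norm_num
  have := MH_null hs h0
  exact sub_eq_zero.mp this

lemma MH_VG : MH (V * G) = -(MHp (V * V)) := by
  have h := ID V G
  rw [NopV, NopG, Dq_zero] at h
  have h2 := ID2 V
  rw [NopV] at h2
  have h3 : Aq * Aq * MH (V * G) = Aq * Aq * (-(MHp (V * V))) := by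
    linear_combination h + h2
  have h4 : Aq * Aq * (MH (V * G) - (-(MHp (V * V)))) = 0 := by linear_combination h3
  rcases mul_eq_zero.mp h4 with h' | h'
  · rcases mul_eq_zero.mp h' with h'' | h'' <;> exact absurd h'' Aq_ne
  · exact sub_eq_zero.mp h'

lemma U_eq : I₁₀ + Dq I₂₀ = V * G := by
  have hMU : MH (I₁₀ + Dq I₂₀) = -(MHp (V * V)) := by rw [MH_U, C₁_eq]
  have hs : MH ((I₁₀ + Dq I₂₀) - V * G) = 0 := by
    rw [MH_sub, hMU, MH_VG, sub_self]
  have h0 : constantCoeff ((I₁₀ + Dq I₂₀) - V * G) = 0 := by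
    rw [map_sub, map_mul, constantCoeff_G, ← coeff_zero_eq_constantCoeff, coeff_U_zero]
    ring
  exact sub_eq_zero.mp (MH_null hs h0)

def W : PowerSeries ℚ := V * V + V * Dq G - G * Dq V

lemma AqDqW : Aq * Dq W = 128 * (X * W) := by
  have h := ID3 V G
  rw [NopV, NopG] at h
  have h2 : Aq * (Aq * Dq W - 128 * (X * W)) = 0 := by
    unfold W
    linear_combination h
  rcases mul_eq_zero.mp h2 with h' | h'
  · exact absurd h' Aq_ne
  · exact sub_eq_zero.mp h'

lemma Dq_Aq : Dq Aq = -(256 * X) := by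
  unfold Aq
  rw [Dq_sub, Dq_one, Dq_mul, Dq_X, Dq_ofNat]
  ring

lemma constantCoeff_W : constantCoeff W = 1 := by
  unfold W
  rw [map_sub, map_add, map_mul, map_mul, map_mul, constantCoeff_V, constantCoeff_G,
    constantCoeff_Dq, constantCoeff_Dq]
  ring

lemma WWA : W * W * Aq = 1 := by
  have hD : Dq (W * W * Aq) = 0 := by
    rw [Dq_mul (W * W) Aq, Dq_mul W W, Dq_Aq]
    linear_combination (2 * W) * AqDqW
  have h := Dq_null hD
  have hcc : constantCoeff (W * W * Aq) = 1 := by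
    rw [map_mul, map_mul, constantCoeff_W, constantCoeff_Aq]; ring
  rw [hcc] at h
  simpa using h

lemma cc_ne_of_one {f : PowerSeries ℚ} (h : constantCoeff f = 1) : constantCoeff f ≠ 0 := by
  rw [h]; norm_num

lemma V_ne : constantCoeff V ≠ 0 := cc_ne_of_one constantCoeff_V

lemma constantCoeff_C₁ : constantCoeff C₁ = 1 := by
  rw [← coeff_zero_eq_constantCoeff]; exact coeff_C₁_zero

lemma constantCoeff_C₂ : constantCoeff C₂ = 1 := by
  unfold C₂
  rw [map_add, constantCoeff_Dq, map_one]
  ring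

lemma C₁C₂_eq_W : C₁ * C₂ = W := by
  have hVV : constantCoeff (V * V) ≠ 0 := by
    rw [map_mul, constantCoeff_V]; norm_num
  have hVVne : (V * V : PowerSeries ℚ) ≠ 0 := by
    intro h; rw [h, map_zero] at hVV; exact hVV rfl
  have hVinv : V⁻¹ * V = 1 := PowerSeries.inv_mul_cancel V V_ne
  have hG : (G * V⁻¹) * V = G := by
    rw [mul_assoc, hVinv, mul_one]
  have h9 : (V * G) * (V * V)⁻¹ = G * V⁻¹ := by
    apply mul_right_cancel₀ hVVne
    have hVVinv : (V * V)⁻¹ * (V * V) = 1 := PowerSeries.inv_mul_cancel _ hVV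
    calc (V * G) * (V * V)⁻¹ * (V * V) = (V * G) * ((V * V)⁻¹ * (V * V)) := by ring
    _ = V * G := by rw [hVVinv, mul_one]
    _ = ((G * V⁻¹) * V) * V := by rw [hG]; ring
    _ = (G * V⁻¹) * (V * V) := by ring
  have hDqG : Dq G = (G * V⁻¹) * Dq V + V * Dq (G * V⁻¹) := by
    conv_lhs => rw [← hG]
    rw [Dq_mul]
  unfold C₂ W
  rw [U_eq, C₁_eq, h9, mul_add, mul_one]
  linear_combination (-V) * hDqG - (G * Dq V) * hVinv



theorem stmt11 :
    2 * A₂ + 2 * Dq C₂ * C₂⁻¹ = (1 - 256 * PowerSeries.X)⁻¹ - 1 := by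
  have hAqdef : (1 - 256 * PowerSeries.X : PowerSeries ℚ) = Aq := rfl
  have hAinv : (1 - 256 * PowerSeries.X : PowerSeries ℚ)⁻¹ = W * W := by
    rw [hAqdef, PowerSeries.inv_eq_iff_mul_eq_one (cc_ne_of_one constantCoeff_Aq)]
    exact WWA
  have hC₁ne := cc_ne_of_one constantCoeff_C₁
  have hC₂ne := cc_ne_of_one constantCoeff_C₂
  have hW3 : Dq W = 128 * (X * (W * (W * W))) := by
    calc Dq W = Dq W * (W * W * Aq) := by rw [WWA, mul_one]
    _ = (Aq * Dq W) * (W * W) := by ring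
    _ = (128 * (X * W)) * (W * W) := by rw [AqDqW]
    _ = 128 * (X * (W * (W * W))) := by ring
  have hCCne : (C₁ * C₂ : PowerSeries ℚ) ≠ 0 := by
    rw [C₁C₂_eq_W]
    intro h
    have hc := constantCoeff_W
    rw [h, map_zero] at hc
    norm_num at hc
  have hDqW : Dq W = C₁ * Dq C₂ + C₂ * Dq C₁ := by
    rw [← C₁C₂_eq_W, Dq_mul]
  have hi1 : C₁⁻¹ * C₁ = 1 := PowerSeries.inv_mul_cancel _ hC₁ne
  have hi2 : C₂⁻¹ * C₂ = 1 := PowerSeries.inv_mul_cancel _ hC₂ne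
  have h2 : W = W * W * W * Aq := by
    calc W = W * (W * W * Aq) := by rw [WWA, mul_one]
    _ = W * W * W * Aq := by ring
  have key : 2 * Dq W = (W * W - 1) * W := by
    calc 2 * Dq W = 2 * (128 * (X * (W * (W * W)))) := by rw [hW3]
    _ = W * W * W - W * W * W * Aq := by unfold Aq; ring
    _ = (W * W - 1) * W := by rw [← h2]; ring
  rw [hAinv]
  apply mul_right_cancel₀ hCCne
  unfold A₂
  calc (2 * (Dq C₁ * C₁⁻¹) + 2 * Dq C₂ * C₂⁻¹) * (C₁ * C₂)
      = 2 * (Dq C₁ * C₂) * (C₁⁻¹ * C₁) + 2 * (Dq C₂ * C₁) * (C₂⁻¹ * C₂) := by ring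
  _ = 2 * (C₁ * Dq C₂ + C₂ * Dq C₁) := by rw [hi1, hi2]; ring
  _ = 2 * Dq W := by rw [hDqW]
  _ = (W * W - 1) * W := key
  _ = (W * W - 1) * (C₁ * C₂) := by rw [C₁C₂_eq_W]

end
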